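/- arXiv:2311.03564 — 3 statements merged into one kernel-verified Lean document; each statement's English description precedes it below -/
import Mathlib

section
/- Fix an integer m ≥ 1 and a real α ∈ (0, ∞). There exists a constant C > 0, depending only on m and α, such that for every L ≥ 0 and every g : [0,1]^m → [0, ∞) that is α-smooth with constant L, one has sup_{a ∈ [0,1]^m} g(a) ≤ C · L^{m/(m+α)} · ( ∫_{[0,1]^m} g(a) da )^{α/(m+α)}, where da denotes Lebesgue measure on [0,1]^m. -/
open MeasureTheory

/-- The unit cube `[0,1]^m` in Euclidean space `ℝ^m`. -/
def euclideanUnitCube (m : ℕ) : Set (EuclideanSpace ℝ (Fin m)) :=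
  {a | ∀ i, a i ∈ Set.Icc (0 : ℝ) 1}

/-- `g` is `α`-smooth with constant `L` on `D`: writing `α = ⌊α⌋ + {α}` with `⌊α⌋`
the largest integer strictly smaller than `α` (i.e. `⌈α⌉₊ - 1` for `α > 0`) and
`{α} ∈ (0,1]`, `g` is `⌊α⌋` times continuously differentiable on `D`, all iterated
Fréchet derivatives of order `j ≤ ⌊α⌋` have operator norm at most `L` on `D`, and the
`⌊α⌋`-th iterated derivative is `{α}`-Hölder continuous on `D` with constant `L`
(w.r.t. the Euclidean norm). -/
def AlphaSmoothOn {m : ℕ} (α L : ℝ) (D : Set (EuclideanSpace ℝ (Fin m)))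
    (g : EuclideanSpace ℝ (Fin m) → ℝ) : Prop :=
  ContDiffOn ℝ (⌈α⌉₊ - 1 : ℕ) g D ∧
  (∀ j : ℕ, j ≤ ⌈α⌉₊ - 1 → ∀ a ∈ D, ‖iteratedFDerivWithin ℝ j g D a‖ ≤ L) ∧
  ∀ a ∈ D, ∀ a' ∈ D,
    ‖iteratedFDerivWithin ℝ (⌈α⌉₊ - 1) g D a - iteratedFDerivWithin ℝ (⌈α⌉₊ - 1) g D a'‖
      ≤ L * ‖a - a'‖ ^ (α - ((⌈α⌉₊ - 1 : ℕ) : ℝ))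

open Set Finset


/-- Taylor's theorem with Hölder remainder: coefficients exist. -/
lemma taylor_holder (μ L b : ℝ) (hμ : 0 < μ) (hb : 0 < b) (hL : 0 ≤ L) :
    ∀ (k : ℕ) (f : ℝ → ℝ), ContDiffOn ℝ k f (Icc 0 b) →
    (∀ x ∈ Icc (0:ℝ) b, ∀ y ∈ Icc (0:ℝ) b,
      |iteratedDerivWithin k f (Icc 0 b) x - iteratedDerivWithin k f (Icc 0 b) y|
        ≤ L * |x - y| ^ μ) →
    ∃ c : ℕ → ℝ, c 0 = f 0 ∧ ∀ t ∈ Icc (0:ℝ) b,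
      |f t - ∑ j ∈ Finset.range (k+1), c j * t ^ j| ≤ L * t ^ ((k:ℝ) + μ) := by
  intro k
  induction k with
  | zero =>
    intro f hf hHol
    refine ⟨fun _ => f 0, rfl, fun t ht => ?_⟩
    have h0 : (0:ℝ) ∈ Icc (0:ℝ) b := ⟨le_refl _, hb.le⟩
    have := hHol t ht 0 h0
    simp only [iteratedDerivWithin_zero] at this
    simpa [sub_zero, abs_of_nonneg ht.1] using this
  | succ k ih =>
    intro f hf hHol
    have hud : UniqueDiffOn ℝ (Icc (0:ℝ) b) := uniqueDiffOn_Icc hb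
    set f' := derivWithin f (Icc (0:ℝ) b) with hf'def
    have hf' : ContDiffOn ℝ k f' (Icc 0 b) :=
      hf.derivWithin hud (by exact_mod_cast le_refl (k+1 : ℕ))
    have hHol' : ∀ x ∈ Icc (0:ℝ) b, ∀ y ∈ Icc (0:ℝ) b,
        |iteratedDerivWithin k f' (Icc 0 b) x - iteratedDerivWithin k f' (Icc 0 b) y|
          ≤ L * |x - y| ^ μ := by
      intro x hx y hy
      have ex : iteratedDerivWithin (k+1) f (Icc 0 b) x
          = iteratedDerivWithin k f' (Icc 0 b) x := congrFun (iteratedDerivWithin_succ' (n := k) (f := f) (s := Icc 0 b)) x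
      have ey : iteratedDerivWithin (k+1) f (Icc 0 b) y
          = iteratedDerivWithin k f' (Icc 0 b) y := congrFun (iteratedDerivWithin_succ' (n := k) (f := f) (s := Icc 0 b)) y
      rw [← ex, ← ey]; exact hHol x hx y hy
    obtain ⟨c', hc'0, hc'⟩ := ih f' hf' hHol'
    refine ⟨fun j => if j = 0 then f 0 else c' (j-1) / j, by simp, ?_⟩
    set c : ℕ → ℝ := fun j => if j = 0 then f 0 else c' (j-1) / j with hcdef
    intro t ht
    set S : ℝ → ℝ := fun t => ∑ j ∈ Finset.range (k+2), c j * t ^ j with hSdef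
    set S' : ℝ → ℝ := fun t => ∑ j ∈ Finset.range (k+1), c' j * t ^ j with hS'def
    have hS0 : S 0 = f 0 := by
      simp only [hSdef]
      rw [Finset.sum_eq_single 0]
      · simp [hcdef]
      · intro j _ hj; simp [zero_pow hj]
      · simp
    have hSderiv : ∀ x : ℝ, HasDerivAt S (S' x) x := by
      intro x
      have h1 : S = fun t => (∑ j ∈ Finset.range (k+1), c (j+1) * t ^ (j+1)) + c 0 * t ^ 0 := by
        funext u; simp only [hSdef]; rw [Finset.sum_range_succ']
      rw [h1]
      have h2 : HasDerivAt (fun t : ℝ => ∑ j ∈ Finset.range (k+1), c (j+1) * t ^ (j+1))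
          (∑ j ∈ Finset.range (k+1), c' j * x ^ j) x := by
        have := HasDerivAt.fun_sum (u := Finset.range (k+1))
          (A := fun j x => c (j+1) * x ^ (j+1)) (A' := fun j => c' j * x ^ j) (x := x)
          (fun j hj => ?_)
        · exact this
        · have hp : HasDerivAt (fun y : ℝ => y ^ (j+1)) ((j+1 : ℕ) * x ^ j) x := by
            simpa using hasDerivAt_pow (j+1) x
          have := hp.const_mul (c (j+1))
          convert this using 1
          on_goal 1 => rfl
          have hj1 : ((j:ℝ)+1) ≠ 0 := by positivity
          simp only [hcdef, if_neg (Nat.succ_ne_zero j), Nat.add_sub_cancel]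
          push_cast
          field_simp
      simpa [hS'def] using (h2.add_const (c 0)).congr_deriv (by simp)
    rcases eq_or_lt_of_le ht.1 with h0t | h0t
    · rw [← h0t]
      rw [Real.zero_rpow (by positivity)]
      simp [hS0.symm]
      exact sub_self _
    · -- t > 0
      have hScont : Continuous S :=
        continuous_finset_sum _ fun j _ => continuous_const.mul (continuous_pow j)
      have hS'cont : Continuous S' :=
        continuous_finset_sum _ fun j _ => continuous_const.mul (continuous_pow j)
      have hcont_f : ContinuousOn f (Icc 0 b) := hf.continuousOn
      have hcont_f' : ContinuousOn f' (Icc 0 b) :=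
        hf.continuousOn_derivWithin hud (by exact_mod_cast Nat.one_le_iff_ne_zero.2 (Nat.succ_ne_zero k))
      have hsub : Icc (0:ℝ) t ⊆ Icc 0 b := Icc_subset_Icc le_rfl ht.2
      have key : ∫ s in (0:ℝ)..t, (f' s - S' s) = (f t - S t) - (f 0 - S 0) := by
        apply intervalIntegral.integral_eq_sub_of_hasDeriv_right_of_le ht.1
        · exact ((hcont_f.mono hsub).sub (Continuous.continuousOn (by continuity)))
        · intro x hx
          have hxm : x ∈ Icc (0:ℝ) b := ⟨hx.1.le, hx.2.le.trans ht.2⟩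
          have hdf : HasDerivWithinAt f (f' x) (Icc 0 b) x := by
            have : DifferentiableWithinAt ℝ f (Icc 0 b) x :=
              hf.differentiableOn (by simp) x hxm
            exact this.hasDerivWithinAt
          have hmem : Icc (0:ℝ) b ∈ nhdsWithin x (Set.Ioi x) := by
            apply mem_nhdsWithin.mpr
            refine ⟨Set.Iio b, isOpen_Iio, lt_of_lt_of_le hx.2 ht.2, ?_⟩
            intro y hy
            exact ⟨(hx.1.trans hy.2).le, hy.1.le⟩
          have := (hdf.mono_of_mem_nhdsWithin hmem).sub ((hSderiv x).hasDerivWithinAt)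
          exact this
        · apply ContinuousOn.intervalIntegrable
          rw [uIcc_of_le ht.1]
          exact (hcont_f'.mono hsub).sub hS'cont.continuousOn
      have e0 : f 0 - S 0 = 0 := by rw [hS0]; ring
      have hbound : |f t - S t| ≤ (L * t ^ ((k:ℝ) + μ)) * |t - 0| := by
        have : f t - S t = ∫ s in (0:ℝ)..t, (f' s - S' s) := by rw [key, e0, sub_zero]
        rw [this, ← Real.norm_eq_abs]
        apply intervalIntegral.norm_integral_le_of_norm_le_const
        intro x hx
        rw [Set.uIoc_of_le ht.1] at hx
        have hxm : x ∈ Icc (0:ℝ) b := ⟨hx.1.le, hx.2.trans ht.2⟩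
        have h1 : |f' x - S' x| ≤ L * x ^ ((k:ℝ) + μ) := hc' x hxm
        have h2 : x ^ ((k:ℝ) + μ) ≤ t ^ ((k:ℝ) + μ) :=
          Real.rpow_le_rpow hx.1.le hx.2 (by positivity)
        rw [Real.norm_eq_abs]
        exact h1.trans (mul_le_mul_of_nonneg_left h2 hL)
      rw [sub_zero, abs_of_pos h0t] at hbound
      calc |f t - S t| ≤ (L * t ^ ((k:ℝ) + μ)) * t := hbound
        _ = L * t ^ (((k:ℕ)+1:ℕ) + μ) := by
            rw [mul_assoc]
            congr 1
            rw [show (((k:ℕ)+1:ℕ):ℝ) + μ = ((k:ℝ)+μ) + 1 by push_cast; ring]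
            rw [Real.rpow_add h0t ((k:ℝ)+μ) 1, Real.rpow_one]


lemma vandermonde_coeff_bound (k : ℕ) : ∃ Ck : ℝ, 0 ≤ Ck ∧
    ∀ (d : Fin (k+1) → ℝ) (B : ℝ),
      (∀ i : Fin (k+1), |∑ j : Fin (k+1), ((i:ℕ):ℝ) ^ (j:ℕ) * d j| ≤ B) →
      ∀ j : Fin (k+1), |d j| ≤ Ck * B := by
  set v : Fin (k+1) → ℝ := fun i => ((i:ℕ):ℝ) with hv
  have hinj : Function.Injective v := by
    intro i j hij
    exact Fin.ext (Nat.cast_injective hij)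
  have hdet : (Matrix.vandermonde v).det ≠ 0 :=
    Matrix.det_vandermonde_ne_zero_iff.mpr hinj
  set W := (Matrix.vandermonde v)⁻¹ with hW
  refine ⟨∑ j : Fin (k+1), ∑ i : Fin (k+1), |W j i|, by positivity, ?_⟩
  intro d B hB j
  have hBnn : 0 ≤ B := le_trans (abs_nonneg _) (hB 0)
  set y := (Matrix.vandermonde v).mulVec d with hy
  have hdW : W.mulVec y = d := by
    rw [hy, Matrix.mulVec_mulVec, Matrix.nonsing_inv_mul _ (isUnit_iff_ne_zero.mpr hdet), Matrix.one_mulVec]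
  have hyB : ∀ i, |y i| ≤ B := by
    intro i
    have : y i = ∑ jj : Fin (k+1), ((i:ℕ):ℝ) ^ (jj:ℕ) * d jj := by
      simp [hy, Matrix.mulVec, dotProduct, Matrix.vandermonde, hv]
    rw [this]; exact hB i
  have : |d j| = |∑ i, W j i * y i| := by rw [← hdW]; rfl
  rw [this]
  calc |∑ i, W j i * y i| ≤ ∑ i, |W j i * y i| := Finset.abs_sum_le_sum_abs _ _
    _ ≤ ∑ i, |W j i| * B := by
        apply Finset.sum_le_sum
        intro i _
        rw [abs_mul]
        exact mul_le_mul_of_nonneg_left (hyB i) (abs_nonneg _)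
    _ = (∑ i, |W j i|) * B := by rw [Finset.sum_mul]
    _ ≤ (∑ jj : Fin (k+1), ∑ i : Fin (k+1), |W jj i|) * B := by
        apply mul_le_mul_of_nonneg_right _ hBnn
        exact Finset.single_le_sum (f := fun jj => ∑ i, |W jj i|)
          (fun jj _ => by positivity) (Finset.mem_univ j)


lemma iteratedDerivWithin_comp_line {E : Type*} [NormedAddCommGroup E] [NormedSpace ℝ E]
    (D : Set E) (hD : UniqueDiffOn ℝ D) (g : E → ℝ) (c u : E) (b : ℝ) (hb : 0 < b)
    (hmaps : ∀ t ∈ Set.Icc (0:ℝ) b, c + t • u ∈ D) :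
    ∀ (k : ℕ), ContDiffOn ℝ k g D →
    ∀ t ∈ Set.Icc (0:ℝ) b,
      iteratedDerivWithin k (fun s => g (c + s • u)) (Set.Icc 0 b) t
        = iteratedFDerivWithin ℝ k g D (c + t • u) (fun _ => u) := by
  intro k
  induction k with
  | zero =>
    intro hg t ht
    simp [iteratedFDerivWithin_zero_apply]
  | succ k ih =>
    intro hg t ht
    have hud' : UniqueDiffOn ℝ (Icc (0:ℝ) b) := uniqueDiffOn_Icc hb
    rw [iteratedDerivWithin_succ]
    have hEq : Set.EqOn (iteratedDerivWithin k (fun s => g (c + s • u)) (Set.Icc 0 b))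
        (fun x : ℝ => iteratedFDerivWithin ℝ k g D (c + x • u) (fun _ => u)) (Icc 0 b) :=
      fun x hx => ih (hg.of_le (by exact_mod_cast Nat.le_succ k)) x hx
    rw [derivWithin_congr hEq (hEq ht)]
    have hψ : HasDerivWithinAt (fun s : ℝ => c + s • u) u (Icc (0:ℝ) b) t := by
      have h1 : HasDerivAt (fun s : ℝ => c + s • u) ((1:ℝ) • u) t :=
        ((hasDerivAt_id t).smul_const u).const_add c
      rw [one_smul] at h1
      exact h1.hasDerivWithinAt
    have hdiff : DifferentiableWithinAt ℝ (iteratedFDerivWithin ℝ k g D) D (c + t • u) :=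
      (hg.differentiableOn_iteratedFDerivWithin (by exact_mod_cast k.lt_succ_self) hD)
        _ (hmaps t ht)
    have hcomp : HasDerivWithinAt (fun x : ℝ => iteratedFDerivWithin ℝ k g D (c + x • u))
        (fderivWithin ℝ (iteratedFDerivWithin ℝ k g D) D (c + t • u) u) (Icc (0:ℝ) b) t :=
      hdiff.hasFDerivWithinAt.comp_hasDerivWithinAt t hψ (fun x hx => hmaps x hx)
    have happ := (ContinuousMultilinearMap.apply ℝ (fun _ : Fin k => E) ℝ
      (fun _ => u)).hasFDerivAt.comp_hasDerivWithinAt t hcomp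
    have hres : HasDerivWithinAt
        (fun x : ℝ => iteratedFDerivWithin ℝ k g D (c + x • u) (fun _ => u))
        (iteratedFDerivWithin ℝ (k+1) g D (c + t • u) (fun _ => u)) (Icc (0:ℝ) b) t := by
      have heq : iteratedFDerivWithin ℝ (k+1) g D (c + t • u) (fun _ => u)
          = (fderivWithin ℝ (iteratedFDerivWithin ℝ k g D) D (c + t • u) u) (fun _ => u) := by
        rw [iteratedFDerivWithin_succ_apply_left]
        rfl
      rw [heq]
      exact happ
    exact hres.derivWithin (hud' t ht)



lemma euclid_coord_le_norm {m : ℕ} (x : EuclideanSpace ℝ (Fin m)) (i : Fin m) :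
    |x i| ≤ ‖x‖ := by
  rw [EuclideanSpace.norm_eq]
  calc |x i| = Real.sqrt (‖x i‖^2) := by
        rw [Real.sqrt_sq_eq_abs, Real.norm_eq_abs, abs_abs]
    _ ≤ _ := Real.sqrt_le_sqrt (Finset.single_le_sum
        (f := fun i => ‖x i‖^2) (fun i _ => by positivity) (Finset.mem_univ i))

lemma euclid_norm_le {m : ℕ} (x : EuclideanSpace ℝ (Fin m)) (r : ℝ) (hr : 0 ≤ r)
    (h : ∀ i, |x i| ≤ r) : ‖x‖ ≤ Real.sqrt m * r := by
  rw [EuclideanSpace.norm_eq]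
  have h1 : ∑ i, ‖x i‖^2 ≤ (m:ℝ) * r^2 := by
    calc ∑ i, ‖x i‖^2 ≤ ∑ _i : Fin m, r^2 := by
          apply Finset.sum_le_sum
          intro i _
          rw [Real.norm_eq_abs, sq_abs, ← sq_abs]
          exact pow_le_pow_left₀ (abs_nonneg _) (h i) 2
      _ = (m:ℝ) * r^2 := by simp [mul_comm]
  calc Real.sqrt (∑ i, ‖x i‖^2) ≤ Real.sqrt ((m:ℝ) * r^2) := Real.sqrt_le_sqrt h1
    _ = Real.sqrt m * r := by
        rw [Real.sqrt_mul (by positivity), Real.sqrt_sq hr]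

lemma euclid_box_volume {m : ℕ} (lo hi : Fin m → ℝ) :
    volume {x : EuclideanSpace ℝ (Fin m) | ∀ i, x i ∈ Icc (lo i) (hi i)}
      = ∏ i, ENNReal.ofReal (hi i - lo i) := by
  have h1 : {x : EuclideanSpace ℝ (Fin m) | ∀ i, x i ∈ Icc (lo i) (hi i)}
      = (MeasurableEquiv.toLp 2 (Fin m → ℝ)).symm ⁻¹'
        (Set.univ.pi fun i => Icc (lo i) (hi i)) := by
    ext x
    constructor
    · intro hx i _
      exact hx i
    · intro hx i
      exact hx i (Set.mem_univ i)
  rw [h1, (EuclideanSpace.volume_preserving_symm_measurableEquiv_toLp (Fin m)).measure_preimage_equiv]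
  rw [volume_pi_pi]
  simp [Real.volume_Icc]

lemma euclid_box_measurable {m : ℕ} (lo hi : Fin m → ℝ) :
    MeasurableSet {x : EuclideanSpace ℝ (Fin m) | ∀ i, x i ∈ Icc (lo i) (hi i)} := by
  have : {x : EuclideanSpace ℝ (Fin m) | ∀ i, x i ∈ Icc (lo i) (hi i)}
      = ⋂ i, (fun x : EuclideanSpace ℝ (Fin m) => x i) ⁻¹' (Icc (lo i) (hi i)) := by
    ext x; simp
  rw [this]
  exact MeasurableSet.iInter fun i =>
    (measurableSet_Icc).preimage (by fun_prop)

lemma euclid_cube_isCompact (m : ℕ) : IsCompact (euclideanUnitCube m) := by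
  rw [Metric.isCompact_iff_isClosed_bounded]
  constructor
  · have : euclideanUnitCube m
        = ⋂ i, (fun x : EuclideanSpace ℝ (Fin m) => x i) ⁻¹' (Icc (0:ℝ) 1) := by
      ext x; simp [euclideanUnitCube]
    rw [this]
    exact isClosed_iInter fun i => (isClosed_Icc).preimage (by fun_prop)
  · apply Bornology.IsBounded.subset (Metric.isBounded_closedBall (x := 0) (r := Real.sqrt m * 1))
    intro x hx
    simp only [Metric.mem_closedBall, dist_zero_right]
    exact euclid_norm_le x 1 zero_le_one fun i => abs_le.mpr ⟨by linarith [(hx i).1], (hx i).2⟩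

lemma euclid_cube_convex (m : ℕ) : Convex ℝ (euclideanUnitCube m) := by
  intro x hx y hy a b ha hb hab
  intro i
  have : (a • x + b • y) i = a * x i + b * y i := rfl
  rw [this]
  exact convex_Icc (0:ℝ) 1 (hx i) (hy i) ha hb hab

lemma euclid_cube_uniqueDiffOn (m : ℕ) : UniqueDiffOn ℝ (euclideanUnitCube m) := by
  apply uniqueDiffOn_convex (euclid_cube_convex m)
  set c : EuclideanSpace ℝ (Fin m) := WithLp.toLp 2 (fun _ => 1/2) with hc
  have hball : Metric.ball c (1/2) ⊆ euclideanUnitCube m := by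
    intro y hy i
    have h1 : |(y - c) i| ≤ ‖y - c‖ := euclid_coord_le_norm (y - c) i
    have h1' : (y - c) i = y i - 1/2 := rfl
    have h2 : ‖y - c‖ < 1/2 := by rw [← dist_eq_norm]; exact hy
    rw [h1'] at h1
    have := abs_lt.mp (lt_of_le_of_lt h1 h2)
    constructor <;> [linarith [this.1]; linarith [this.2]]
  refine ⟨c, ?_⟩
  exact interior_maximal hball Metric.isOpen_ball (Metric.mem_ball_self (by norm_num))

set_option maxHeartbeats 2000000

/-- **Uniform bound on nonnegative `α`-smooth functions (proof of Theorem 1).**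
There is a constant `C > 0` depending only on `m` and `α` such that every
nonnegative `α`-smooth function `g` on `[0,1]^m` with constant `L` satisfies
`sup g ≤ C ⬝ L^{m/(m+α)} ⬝ (∫ g)^{α/(m+α)}`. -/
theorem sup_le_of_alphaSmooth (m : ℕ) (hm : 1 ≤ m) (α : ℝ) (hα : 0 < α) :
    ∃ C : ℝ, 0 < C ∧
      ∀ (L : ℝ), 0 ≤ L →
        ∀ g : EuclideanSpace ℝ (Fin m) → ℝ,
          (∀ a ∈ euclideanUnitCube m, 0 ≤ g a) →
          AlphaSmoothOn α L (euclideanUnitCube m) g →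
          ∀ a ∈ euclideanUnitCube m,
            g a ≤ C * L ^ ((m : ℝ) / (m + α)) *
              (∫ x in euclideanUnitCube m, g x) ^ (α / (m + α)) := by
  classical
  set k : ℕ := ⌈α⌉₊ - 1 with hkdef
  have hceil : ⌈α⌉₊ = k + 1 := by
    have h1 : 1 ≤ ⌈α⌉₊ := Nat.one_le_iff_ne_zero.mpr (by
      intro h; exact absurd (Nat.ceil_eq_zero.mp h) (not_le.mpr hα))
    omega
  have hkα : (k : ℝ) < α := by
    have h2 : (⌈α⌉₊ : ℝ) < α + 1 := Nat.ceil_lt_add_one hα.le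
    rw [hceil] at h2; push_cast at h2; linarith
  have hαk1 : α ≤ (k : ℝ) + 1 := by
    have := Nat.le_ceil α; rw [hceil] at this; push_cast at this; linarith
  set μ : ℝ := α - (k : ℝ) with hμdef
  have hμpos : 0 < μ := by simp only [hμdef]; linarith
  have hμ1 : μ ≤ 1 := by simp only [hμdef]; linarith
  have hkμ : (k : ℝ) + μ = α := by simp only [hμdef]; ring
  obtain ⟨Ck, hCk0, hCk⟩ := vandermonde_coeff_bound k
  set A : ℝ := (k : ℝ) * Ck * (1 + (k:ℝ) ^ α) with hAdef
  have hA0 : 0 ≤ A := by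
    have : (0:ℝ) ≤ (k:ℝ) ^ α := Real.rpow_nonneg (Nat.cast_nonneg k) α
    positivity
  set ε : ℝ := min (4 * (A + 1))⁻¹ ((1/4 : ℝ) ^ (α⁻¹)) with hεdef
  have hεpos : 0 < ε := by
    apply lt_min (by positivity)
    exact Real.rpow_pos_of_pos (by norm_num) _
  have hε1 : ε ≤ 1 := by
    apply le_trans (min_le_left _ _)
    rw [inv_le_one_iff₀]; right; linarith
  have hsqm : (1:ℝ) ≤ Real.sqrt m := by
    rw [show (1:ℝ) = Real.sqrt 1 by simp]
    exact Real.sqrt_le_sqrt (by exact_mod_cast hm)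
  have hsqm0 : 0 < Real.sqrt m := lt_of_lt_of_le one_pos hsqm
  set c₇ : ℝ := ε / ((2*(k:ℝ)+2) * Real.sqrt m) with hc₇def
  have hc₇pos : 0 < c₇ := by
    apply div_pos hεpos
    positivity
  set c₈ : ℝ := c₇ ^ m / 2 with hc₈def
  have hc₈pos : 0 < c₈ := by positivity
  set C : ℝ := max 1 c₈⁻¹ with hCdef
  have hCpos : 0 < C := lt_of_lt_of_le one_pos (le_max_left _ _)
  refine ⟨C, hCpos, ?_⟩
  intro L hL g hg0 hsm a ha
  obtain ⟨hgC, hgD, hgH⟩ := hsm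
  rw [show (⌈α⌉₊ - 1 : ℕ) = k from rfl] at hgC hgD hgH
  set D := euclideanUnitCube m with hDdef
  have hDmeas : MeasurableSet D := (euclid_cube_isCompact m).isClosed.measurableSet
  have hDne : D.Nonempty := ⟨(WithLp.toLp 2 (fun _ => 0) : EuclideanSpace ℝ (Fin m)),
    fun i => ⟨le_refl 0, zero_le_one⟩⟩
  have hgcont : ContinuousOn g D := hgC.continuousOn
  have hUD : UniqueDiffOn ℝ D := euclid_cube_uniqueDiffOn m
  obtain ⟨astar, hastar, hmax⟩ := (euclid_cube_isCompact m).exists_isMaxOn hDne hgcont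
  set M := g astar with hMdef
  set I := ∫ x in D, g x with hIdef
  have hInn : 0 ≤ I := setIntegral_nonneg hDmeas hg0
  have hRHS : 0 ≤ C * L ^ ((m : ℝ) / (m + α)) * I ^ (α / (m + α)) := by
    have h1 : (0:ℝ) ≤ L ^ ((m : ℝ) / (m + α)) := Real.rpow_nonneg hL _
    have h2 : (0:ℝ) ≤ I ^ (α / (m + α)) := Real.rpow_nonneg hInn _
    positivity
  by_cases hM : M ≤ 0
  · exact le_trans (hmax ha) (le_trans hM hRHS)
  push_neg at hM
  have hML : M ≤ L := by
    have := hgD 0 (Nat.zero_le _) astar hastar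
    rwa [norm_iteratedFDerivWithin_zero, Real.norm_eq_abs, abs_of_pos hM] at this
  have hLpos : 0 < L := lt_of_lt_of_le hM hML
  set x₀ : ℝ := (M/L) ^ (α⁻¹) with hx₀def
  have hx₀pos : 0 < x₀ := Real.rpow_pos_of_pos (div_pos hM hLpos) _
  have hx₀1 : x₀ ≤ 1 :=
    Real.rpow_le_one (by positivity) (div_le_one_of_le₀ hML hLpos.le) (by positivity)
  set h : ℝ := min x₀ ((2*(k:ℝ)+2)⁻¹) with hhdef
  have hhpos : 0 < h := lt_min hx₀pos (by positivity)
  have hh2k : h ≤ (2*(k:ℝ)+2)⁻¹ := min_le_right _ _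
  have hh12 : h ≤ 1/2 := le_trans hh2k (by
    rw [inv_le_comm₀ (by positivity) (by norm_num)]
    norm_num)
  have hhx₀ : h ≤ x₀ := min_le_left _ _
  have hhα : L * h ^ α ≤ M := by
    have h1 : h ^ α ≤ x₀ ^ α := Real.rpow_le_rpow hhpos.le hhx₀ hα.le
    have h2 : x₀ ^ α = M / L := by
      rw [hx₀def, ← Real.rpow_mul (by positivity), inv_mul_cancel₀ hα.ne', Real.rpow_one]
    calc L * h ^ α ≤ L * (M / L) := by
          apply mul_le_mul_of_nonneg_left _ hL
          rw [← h2]; exact h1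
      _ = M := by field_simp
  have hhlow : (2*(k:ℝ)+2)⁻¹ * x₀ ≤ h := by
    rcases le_total x₀ ((2*(k:ℝ)+2)⁻¹) with hc | hc
    · rw [hhdef, min_eq_left hc]
      apply mul_le_of_le_one_left hx₀pos.le
      rw [inv_le_one_iff₀]; right; have : (0:ℝ) ≤ (k:ℝ) := Nat.cast_nonneg k; linarith
    · rw [hhdef, min_eq_right hc]
      calc (2*(k:ℝ)+2)⁻¹ * x₀ ≤ (2*(k:ℝ)+2)⁻¹ * 1 := by
            apply mul_le_mul_of_nonneg_left hx₀1 (by positivity)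
        _ = (2*(k:ℝ)+2)⁻¹ := mul_one _
  set ρ : ℝ := ε * h / Real.sqrt m with hρdef
  have hρpos : 0 < ρ := by positivity
  have hρεh : Real.sqrt m * ρ = ε * h := by
    rw [hρdef]; field_simp
  have hρ12 : ρ ≤ 1/2 := by
    have h1 : ρ ≤ ε * h := by
      rw [hρdef]
      apply div_le_self (by positivity) hsqm
    have h2 : ε * h ≤ h := mul_le_of_le_one_left hhpos.le hε1
    linarith
  set lo : Fin m → ℝ := fun i => if astar i ≤ 1/2 then astar i else astar i - ρ with hlodef
  set hi : Fin m → ℝ := fun i => if astar i ≤ 1/2 then astar i + ρ else astar i with hhidef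
  set Q : Set (EuclideanSpace ℝ (Fin m)) := {x | ∀ i, x i ∈ Icc (lo i) (hi i)} with hQdef
  have hQD : Q ⊆ D := by
    intro x hx i
    have hxi := hx i
    have ha0 := (hastar i).1
    have ha1 := (hastar i).2
    simp only [hlodef, hhidef] at hxi
    by_cases hci : astar i ≤ 1/2
    · rw [if_pos hci, if_pos hci] at hxi
      exact ⟨le_trans ha0 hxi.1, by linarith only [hxi.2, hci, hρ12]⟩
    · rw [if_neg hci, if_neg hci] at hxi
      push_neg at hci
      exact ⟨by linarith only [hxi.1, hci, hρ12], le_trans hxi.2 ha1⟩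
  have hQg : ∀ x ∈ Q, M/2 ≤ g x := by
    intro x hxQ
    by_cases hxeq : x = astar
    · rw [hxeq]; linarith only [hM]
    · set v : EuclideanSpace ℝ (Fin m) := x - astar with hvdef
      have hvne : v ≠ 0 := sub_ne_zero.mpr hxeq
      set s : ℝ := ‖v‖ with hsdef
      have hspos : 0 < s := norm_pos_iff.mpr hvne
      set u : EuclideanSpace ℝ (Fin m) := s⁻¹ • v with hudef
      have hunorm : ‖u‖ = 1 := by
        rw [hudef, norm_smul, norm_inv, Real.norm_eq_abs, abs_of_pos hspos, ← hsdef,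
          inv_mul_cancel₀ hspos.ne']
      have hvcoord : ∀ i, v i = x i - astar i := fun i => rfl
      have hucoord : ∀ i, u i = s⁻¹ * v i := fun i => rfl
      have hvbound : ∀ i, |v i| ≤ ρ := by
        intro i
        have hxi := hxQ i
        simp only [hlodef, hhidef] at hxi
        by_cases hci : astar i ≤ 1/2
        · rw [if_pos hci, if_pos hci] at hxi
          rw [hvcoord i, abs_le]
          exact ⟨by linarith only [hxi.1, hρpos], by linarith only [hxi.2]⟩
        · rw [if_neg hci, if_neg hci] at hxi
          rw [hvcoord i, abs_le]
          exact ⟨by linarith only [hxi.1], by linarith only [hxi.2, hρpos]⟩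
      have hsεh : s ≤ ε * h := by
        have h1 := euclid_norm_le v ρ hρpos.le hvbound
        rw [← hsdef] at h1
        calc s ≤ Real.sqrt m * ρ := h1
          _ = ε * h := hρεh
      have hubound : ∀ i, |u i| ≤ 1 := fun i => hunorm ▸ euclid_coord_le_norm u i
      have husign : ∀ i, (astar i ≤ 1/2 → 0 ≤ u i) ∧ (1/2 < astar i → u i ≤ 0) := by
        intro i
        have hxi := hxQ i
        simp only [hlodef, hhidef] at hxi
        constructor
        · intro hci
          rw [if_pos hci, if_pos hci] at hxi
          rw [hucoord i, hvcoord i]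
          have : 0 ≤ x i - astar i := by linarith [hxi.1]
          positivity
        · intro hci
          rw [if_neg (not_le.mpr hci), if_neg (not_le.mpr hci)] at hxi
          rw [hucoord i, hvcoord i]
          have h1 : x i - astar i ≤ 0 := by linarith [hxi.2]
          exact mul_nonpos_of_nonneg_of_nonpos (by positivity) h1
      have hmaps : ∀ t ∈ Icc (0:ℝ) (1/2), astar + t • u ∈ D := by
        intro t ht i
        have hcoord : (astar + t • u) i = astar i + t * u i := rfl
        rw [hcoord]
        have htu : |t * u i| ≤ 1/2 := by
          rw [abs_mul, abs_of_nonneg ht.1]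
          calc t * |u i| ≤ (1/2) * 1 :=
              mul_le_mul ht.2 (hubound i) (abs_nonneg _) (by norm_num)
            _ = 1/2 := by norm_num
        have htu' := abs_le.mp htu
        by_cases hci : astar i ≤ 1/2
        · have hui := (husign i).1 hci
          constructor
          · have h5 : 0 ≤ t * u i := mul_nonneg ht.1 hui
            linarith only [h5, (hastar i).1]
          · linarith only [htu'.2, hci]
        · push_neg at hci
          have hui := (husign i).2 hci
          constructor
          · have h5 := htu'.1
            linarith only [h5, hci]
          · have h5 : t * u i ≤ 0 := mul_nonpos_of_nonneg_of_nonpos ht.1 hui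
            linarith only [h5, (hastar i).2]
      have hline := iteratedDerivWithin_comp_line D hUD g astar u (1/2) (by norm_num)
        hmaps k hgC
      set φ : ℝ → ℝ := fun t => g (astar + t • u) with hφdef
      have hφC : ContDiffOn ℝ k φ (Icc 0 (1/2)) :=
        hgC.comp (ContDiff.contDiffOn
          (contDiff_const.add (contDiff_id.smul contDiff_const)))
          (fun t ht => hmaps t ht)
      have hφHol : ∀ x' ∈ Icc (0:ℝ) (1/2), ∀ y' ∈ Icc (0:ℝ) (1/2),
          |iteratedDerivWithin k φ (Icc 0 (1/2)) x'
            - iteratedDerivWithin k φ (Icc 0 (1/2)) y'| ≤ L * |x' - y'| ^ μ := by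
        intro x' hx' y' hy'
        rw [hline x' hx', hline y' hy']
        set T := iteratedFDerivWithin ℝ k g D (astar + x' • u)
          - iteratedFDerivWithin ℝ k g D (astar + y' • u) with hTdef
        have h1 : iteratedFDerivWithin ℝ k g D (astar + x' • u) (fun _ => u)
            - iteratedFDerivWithin ℝ k g D (astar + y' • u) (fun _ => u)
            = T (fun _ => u) := by
          rw [hTdef, ContinuousMultilinearMap.sub_apply]
        rw [← Real.norm_eq_abs, h1]
        calc ‖T (fun _ => u)‖ ≤ ‖T‖ * ∏ _i : Fin k, ‖u‖ := T.le_opNorm _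
          _ = ‖T‖ := by rw [hunorm]; simp
          _ ≤ L * ‖(astar + x' • u) - (astar + y' • u)‖ ^ (α - (k:ℝ)) :=
              hgH _ (hmaps x' hx') _ (hmaps y' hy')
          _ = L * |x' - y'| ^ μ := by
              rw [show (astar + x' • u) - (astar + y' • u) = (x' - y') • u by
                rw [sub_smul]; abel]
              rw [norm_smul, hunorm, mul_one, Real.norm_eq_abs, hμdef]
      obtain ⟨c, hc0, hTay⟩ := taylor_holder μ L (1/2) hμpos (by norm_num) hL k φ hφC hφHol
      have hnode : ∀ i : Fin (k+1), ((i:ℕ):ℝ) * h ∈ Icc (0:ℝ) (1/2) := by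
        intro i
        have hik : ((i:ℕ):ℝ) ≤ (k:ℝ) := by exact_mod_cast Fin.is_le i
        constructor
        · positivity
        · calc ((i:ℕ):ℝ) * h ≤ (k:ℝ) * h := mul_le_mul_of_nonneg_right hik hhpos.le
            _ ≤ (k:ℝ) * (2*(k:ℝ)+2)⁻¹ := mul_le_mul_of_nonneg_left hh2k (Nat.cast_nonneg k)
            _ ≤ 1/2 := by
                rw [mul_inv_le_iff₀ (by positivity)]
                linarith only []
      have hgrange : ∀ t ∈ Icc (0:ℝ) (1/2), 0 ≤ φ t ∧ φ t ≤ M :=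
        fun t ht => ⟨hg0 _ (hmaps t ht), hmax (hmaps t ht)⟩
      have hkα0 : (0:ℝ) ≤ (k:ℝ)^α := Real.rpow_nonneg (Nat.cast_nonneg k) α
      have hPbound : ∀ i : Fin (k+1),
          |∑ j ∈ Finset.range (k+1), c j * (((i:ℕ):ℝ) * h) ^ j| ≤ (1 + (k:ℝ)^α) * M := by
        intro i
        have h1 := hTay _ (hnode i)
        rw [hkμ] at h1
        have h2 := hgrange _ (hnode i)
        have hik : ((i:ℕ):ℝ) ≤ (k:ℝ) := by exact_mod_cast Fin.is_le i
        have h3 : L * (((i:ℕ):ℝ) * h) ^ α ≤ (k:ℝ)^α * M := by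
          have hb1 : (((i:ℕ):ℝ) * h) ^ α ≤ ((k:ℝ) * h) ^ α :=
            Real.rpow_le_rpow (by positivity)
              (mul_le_mul_of_nonneg_right hik hhpos.le) hα.le
          have hb2 : ((k:ℝ) * h) ^ α = (k:ℝ)^α * h^α :=
            Real.mul_rpow (Nat.cast_nonneg k) hhpos.le
          calc L * (((i:ℕ):ℝ) * h) ^ α ≤ L * ((k:ℝ)^α * h^α) := by
                rw [← hb2]; exact mul_le_mul_of_nonneg_left hb1 hL
            _ = (k:ℝ)^α * (L * h^α) := by ring
            _ ≤ (k:ℝ)^α * M := mul_le_mul_of_nonneg_left hhα hkα0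
        have h5 : |φ (((i:ℕ):ℝ) * h)| ≤ M :=
          abs_le.mpr ⟨by linarith only [h2.1, hM], h2.2⟩
        set t₀ : ℝ := ((i:ℕ):ℝ) * h with ht₀
        set Pt : ℝ := ∑ j ∈ Finset.range (k+1), c j * t₀ ^ j with hPt
        have h7 : |Pt| ≤ |Pt - φ t₀| + |φ t₀| := by
          calc |Pt| = |(Pt - φ t₀) + φ t₀| := by ring_nf
            _ ≤ |Pt - φ t₀| + |φ t₀| := abs_add_le _ _
        have h8 : |Pt - φ t₀| = |φ t₀ - Pt| := abs_sub_comm _ _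
        have h9 : |φ t₀ - Pt| ≤ (k:ℝ)^α * M := le_trans h1 h3
        calc |Pt| ≤ |Pt - φ t₀| + |φ t₀| := h7
          _ ≤ (k:ℝ)^α * M + M := by
              rw [h8]
              exact add_le_add h9 h5
          _ = (1 + (k:ℝ)^α) * M := by ring
      set d : Fin (k+1) → ℝ := fun j => c (j:ℕ) * h ^ (j:ℕ) with hddef
      have hdB : ∀ j : Fin (k+1), |d j| ≤ Ck * ((1 + (k:ℝ)^α) * M) := by
        apply hCk
        intro i
        have heq : ∑ j : Fin (k+1), ((i:ℕ):ℝ)^(j:ℕ) * d j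
            = ∑ j ∈ Finset.range (k+1), c j * (((i:ℕ):ℝ) * h) ^ j := by
          rw [← Fin.sum_univ_eq_sum_range (fun j => c j * (((i:ℕ):ℝ) * h) ^ j) (k+1)]
          apply Finset.sum_congr rfl
          intro j _
          rw [hddef, mul_pow]
          ring
        rw [heq]
        exact hPbound i
      have hsmem : s ∈ Icc (0:ℝ) (1/2) := by
        constructor
        · exact hspos.le
        · have h1 : ε * h ≤ h := mul_le_of_le_one_left hhpos.le hε1
          linarith only [hsεh, h1, hh12]
      have hφs : φ s = g x := by
        have hax : astar + s • u = x := by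
          rw [hudef, smul_smul, mul_inv_cancel₀ hspos.ne', one_smul, hvdef]
          abel
        show g (astar + s • u) = g x
        rw [hax]
      have hφ0 : φ 0 = M := by
        show g (astar + (0:ℝ) • u) = M
        rw [zero_smul, add_zero]
      have hc0M : c 0 = M := by rw [hc0, hφ0]
      have hBnn : 0 ≤ Ck * ((1 + (k:ℝ)^α) * M) := by positivity
      have htail : ∀ j ∈ Finset.range k,
          |c (j+1) * s ^ (j+1)| ≤ Ck * ((1 + (k:ℝ)^α) * M) * ε := by
        intro j hj
        have hjk := Finset.mem_range.mp hj
        have hd1 := hdB ⟨j+1, by omega⟩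
        simp only [hddef] at hd1
        have hsh : s / h ≤ ε := by
          rw [div_le_iff₀ hhpos]; exact hsεh
        have hsh0 : (0:ℝ) ≤ s / h := by positivity
        have hsh1 : s / h ≤ 1 := le_trans hsh hε1
        have hs' : s = h * (s/h) := by field_simp
        have key : c (j+1) * s ^ (j+1)
            = (c (j+1) * h ^ (j+1)) * (s/h)^(j+1) := by
          calc c (j+1) * s ^ (j+1) = c (j+1) * (h * (s/h)) ^ (j+1) := by rw [← hs']
            _ = (c (j+1) * h ^ (j+1)) * (s/h)^(j+1) := by rw [mul_pow]; ring
        calc |c (j+1) * s^(j+1)| = |c (j+1) * h^(j+1)| * (s/h)^(j+1) := by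
              rw [key, abs_mul, abs_of_nonneg (by positivity : (0:ℝ) ≤ (s/h)^(j+1))]
          _ ≤ (Ck * ((1 + (k:ℝ)^α) * M)) * (s/h)^(j+1) :=
              mul_le_mul_of_nonneg_right hd1 (by positivity)
          _ ≤ (Ck * ((1 + (k:ℝ)^α) * M)) * (s/h) := by
              apply mul_le_mul_of_nonneg_left _ hBnn
              calc (s/h)^(j+1) ≤ (s/h)^1 :=
                    pow_le_pow_of_le_one hsh0 hsh1 (by omega)
                _ = s/h := pow_one _
          _ ≤ (Ck * ((1 + (k:ℝ)^α) * M)) * ε := mul_le_mul_of_nonneg_left hsh hBnn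
      have hPs : M - M/4 ≤ ∑ j ∈ Finset.range (k+1), c j * s ^ j := by
        rw [Finset.sum_range_succ' (fun j => c j * s ^ j) k]
        have hsum : |∑ j ∈ Finset.range k, c (j+1) * s^(j+1)| ≤ M/4 := by
          calc |∑ j ∈ Finset.range k, c (j+1) * s^(j+1)|
              ≤ ∑ j ∈ Finset.range k, |c (j+1) * s^(j+1)| :=
                Finset.abs_sum_le_sum_abs _ _
            _ ≤ ∑ _j ∈ Finset.range k, Ck * ((1 + (k:ℝ)^α) * M) * ε :=
                Finset.sum_le_sum htail
            _ = (k:ℝ) * (Ck * ((1 + (k:ℝ)^α) * M) * ε) := by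
                rw [Finset.sum_const, Finset.card_range, nsmul_eq_mul]
            _ = (A * ε) * M := by rw [hAdef]; ring
            _ ≤ (1/4) * M := by
                apply mul_le_mul_of_nonneg_right _ hM.le
                have hε4 : ε ≤ (4 * (A + 1))⁻¹ := min_le_left _ _
                calc A * ε ≤ A * (4 * (A + 1))⁻¹ :=
                      mul_le_mul_of_nonneg_left hε4 hA0
                  _ ≤ 1/4 := by
                      rw [mul_inv_le_iff₀ (by positivity)]
                      linarith only []
            _ = M/4 := by ring
        have h7 := (abs_le.mp hsum).1
        have h8 : c 0 * s ^ 0 = M := by rw [hc0M]; simp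
        linarith only [h7, h8]
      have hLs : L * s ^ α ≤ M/4 := by
        have h1 : s ^ α ≤ (ε*h)^α := Real.rpow_le_rpow hspos.le hsεh hα.le
        have h2 : (ε*h)^α = ε^α * h^α := Real.mul_rpow hεpos.le hhpos.le
        have h3 : ε^α ≤ 1/4 := by
          have h4 := Real.rpow_le_rpow hεpos.le
            (min_le_right (4 * (A + 1))⁻¹ ((1/4 : ℝ) ^ (α⁻¹)) : ε ≤ (1/4:ℝ)^(α⁻¹)) hα.le
          rwa [← Real.rpow_mul (by norm_num : (0:ℝ) ≤ 1/4), inv_mul_cancel₀ hα.ne',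
            Real.rpow_one] at h4
        calc L * s^α ≤ L * (ε^α * h^α) := by
              rw [← h2]; exact mul_le_mul_of_nonneg_left h1 hL
          _ = ε^α * (L * h^α) := by ring
          _ ≤ (1/4) * M := by
              apply mul_le_mul h3 hhα (by positivity) (by norm_num)
          _ = M/4 := by ring
      have hTs := hTay s hsmem
      rw [hkμ] at hTs
      have h9 := (abs_le.mp hTs).1
      rw [← hφs]
      linarith only [h9, hPs, hLs]
  have hQmeas : MeasurableSet Q := euclid_box_measurable lo hi
  have hvolQ : volume Q = (ENNReal.ofReal ρ) ^ m := by
    rw [hQdef, euclid_box_volume lo hi]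
    have hwid : ∀ i : Fin m, hi i - lo i = ρ := by
      intro i; simp only [hlodef, hhidef]; split <;> ring
    rw [Finset.prod_congr rfl (fun i _ => by rw [hwid i])]
    simp [Finset.prod_const, Finset.card_univ]
  have hvolQtop : volume Q < ⊤ := by
    rw [hvolQ]
    exact ENNReal.pow_lt_top ENNReal.ofReal_lt_top
  have hvolQtoReal : (volume Q).toReal = ρ ^ m := by
    rw [hvolQ, ENNReal.toReal_pow, ENNReal.toReal_ofReal hρpos.le]
  have hIntD : IntegrableOn g D := hgcont.integrableOn_compact (euclid_cube_isCompact m)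
  have hIntQ : IntegrableOn g Q := hIntD.mono_set hQD
  have hstep1 : M/2 * ρ^m ≤ ∫ x in Q, g x := by
    have hconst : ∫ _x in Q, (M/2) = (volume Q).toReal • (M/2) := setIntegral_const _
    have hmono := setIntegral_mono_on (integrableOn_const hvolQtop.ne)
      hIntQ hQmeas hQg
    rw [hconst, hvolQtoReal, smul_eq_mul] at hmono
    linarith only [hmono]
  have hstep2 : (∫ x in Q, g x) ≤ I := by
    rw [hIdef]
    apply setIntegral_mono_set hIntD
    · exact (ae_restrict_iff' hDmeas).mpr (ae_of_all _ (fun x hx => hg0 x hx))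
    · exact HasSubset.Subset.eventuallyLE hQD
  have hIlow : M/2 * ρ^m ≤ I := le_trans hstep1 hstep2
  have hρlow : c₇ * x₀ ≤ ρ := by
    have h1 : ε * ((2*(k:ℝ)+2)⁻¹ * x₀) ≤ ε * h := mul_le_mul_of_nonneg_left hhlow hεpos.le
    calc c₇ * x₀ = ε * ((2*(k:ℝ)+2)⁻¹ * x₀) / Real.sqrt m := by
          rw [hc₇def]; field_simp
      _ ≤ ε * h / Real.sqrt m := by gcongr
      _ = ρ := by rw [hρdef]
  have hρm : c₇^m * (M/L)^((m:ℝ)/α) ≤ ρ^m := by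
    have h1 : (c₇ * x₀)^m ≤ ρ^m := pow_le_pow_left₀ (by positivity) hρlow m
    rw [mul_pow] at h1
    have h2 : x₀ ^ m = (M/L)^((m:ℝ)/α) := by
      rw [hx₀def, ← Real.rpow_natCast ((M/L) ^ α⁻¹) m, ← Real.rpow_mul (by positivity)]
      congr 1
      field_simp
    rw [← h2]; exact h1
  have hkey : c₈ * (M * (M/L)^((m:ℝ)/α)) ≤ I := by
    calc c₈ * (M * (M/L)^((m:ℝ)/α)) = M/2 * (c₇^m * (M/L)^((m:ℝ)/α)) := by
          rw [hc₈def]; ring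
      _ ≤ M/2 * ρ^m := mul_le_mul_of_nonneg_left hρm (by positivity)
      _ ≤ I := hIlow
  set θ : ℝ := α / ((m:ℝ) + α) with hθdef
  have hmα : (0:ℝ) < (m:ℝ) + α := by positivity
  have hθpos : 0 < θ := by rw [hθdef]; positivity
  have hθ1 : θ ≤ 1 := by
    rw [hθdef, div_le_one hmα]
    have : (0:ℝ) ≤ (m:ℝ) := Nat.cast_nonneg m
    linarith only [this]
  have hXpos : 0 < M * (M/L)^((m:ℝ)/α) := by
    have := Real.rpow_pos_of_pos (div_pos hM hLpos) ((m:ℝ)/α)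
    positivity
  have hIpos : 0 < I := lt_of_lt_of_le (by positivity) hkey
  have hMr : M * (M/L)^((m:ℝ)/α) ≤ I * c₈⁻¹ := by
    rw [mul_comm I, ← div_eq_inv_mul]
    rw [le_div_iff₀ hc₈pos]
    linarith only [hkey]
  have hMpow : M ^ (((m:ℝ)+α)/α) ≤ (I * c₈⁻¹) * L ^ ((m:ℝ)/α) := by
    have hexp : ((m:ℝ)+α)/α = 1 + (m:ℝ)/α := by field_simp; ring
    have h1 : M ^ (((m:ℝ)+α)/α) = M * M ^ ((m:ℝ)/α) := by
      rw [hexp, Real.rpow_add hM, Real.rpow_one]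
    have h2 : (M/L)^((m:ℝ)/α) * L^((m:ℝ)/α) = M ^ ((m:ℝ)/α) := by
      rw [← Real.mul_rpow (by positivity) hL, div_mul_cancel₀ _ hLpos.ne']
    have h3 : M ^ (((m:ℝ)+α)/α) = (M * (M/L)^((m:ℝ)/α)) * L^((m:ℝ)/α) := by
      rw [h1, ← h2]; ring
    rw [h3]
    exact mul_le_mul_of_nonneg_right hMr (Real.rpow_nonneg hL _)
  have hfin : M ≤ (I * c₈⁻¹) ^ θ * L ^ ((m:ℝ)/((m:ℝ)+α)) := by
    have h1 : (M ^ (((m:ℝ)+α)/α)) ^ θ ≤ ((I * c₈⁻¹) * L ^ ((m:ℝ)/α)) ^ θ :=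
      Real.rpow_le_rpow (Real.rpow_nonneg hM.le _) hMpow hθpos.le
    have h2 : (M ^ (((m:ℝ)+α)/α)) ^ θ = M := by
      rw [← Real.rpow_mul hM.le]
      rw [show (((m:ℝ)+α)/α) * θ = 1 by rw [hθdef]; field_simp, Real.rpow_one]
    have h3 : ((I * c₈⁻¹) * L ^ ((m:ℝ)/α)) ^ θ
        = (I * c₈⁻¹)^θ * L ^ ((m:ℝ)/((m:ℝ)+α)) := by
      rw [Real.mul_rpow (by positivity) (Real.rpow_nonneg hL _)]
      congr 1
      rw [← Real.rpow_mul hL]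
      congr 1
      rw [hθdef]
      field_simp
    rw [h2, h3] at h1
    exact h1
  have hc8C : (I * c₈⁻¹)^θ ≤ C * I^θ := by
    rw [Real.mul_rpow hInn (by positivity)]
    have h1 : (c₈⁻¹)^θ ≤ C := by
      rcases le_total (c₈⁻¹) 1 with hc | hc
      · exact le_trans (Real.rpow_le_one (by positivity) hc hθpos.le) (le_max_left _ _)
      · calc (c₈⁻¹)^θ ≤ (c₈⁻¹)^(1:ℝ) := Real.rpow_le_rpow_of_exponent_le hc hθ1
          _ = c₈⁻¹ := Real.rpow_one _
          _ ≤ C := le_max_right _ _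
    calc I^θ * (c₈⁻¹)^θ ≤ I^θ * C :=
          mul_le_mul_of_nonneg_left h1 (Real.rpow_nonneg hInn _)
      _ = C * I^θ := mul_comm _ _
  calc g a ≤ M := hmax ha
    _ ≤ (I * c₈⁻¹)^θ * L ^ ((m:ℝ)/((m:ℝ)+α)) := hfin
    _ ≤ (C * I^θ) * L ^ ((m:ℝ)/((m:ℝ)+α)) :=
        mul_le_mul_of_nonneg_right hc8C (Real.rpow_nonneg hL _)
    _ = C * L ^ ((m:ℝ)/((m:ℝ)+α)) * I^θ := by ring
end

section
/- Let m ≥ 1 be an integer, α ∈ (0,1], L ≥ 0, and K ≥ 1, and set r = K^{−1/m}/2. Let A = [0,1]^m ⊆ ℝ^m with Lebesgue measure. For each a′ ∈ A, let ν_{a′} denote the uniform probability measure on the set B_∞(a′, r) ∩ A, where B_∞(a′, r) = { x ∈ ℝ^m : ‖x − a′‖_∞ ≤ r }. Given a probability measure π on A, define the smoothed measure π_K on A by π_K(E) = ∫_A ν_{a′}(E) dπ(a′) for measurable E ⊆ A (i.e. π_K is the bind of π with the kernel a′ ↦ ν_{a′}). Then for every measurable f : A → [0,1] satisfying |f(x)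 − f(y)| ≤ L ‖x − y‖₂^α for all x, y ∈ A, one has | ∫_A f dπ_K − ∫_A f dπ | ≤ √m · L · K^{−α/m}. -/
open MeasureTheory

/-- The `ℓ∞` ball of radius `r` around `a'` in `ℝ^m`. -/
def linftyBall (m : ℕ) (a' : EuclideanSpace ℝ (Fin m)) (r : ℝ) :
    Set (EuclideanSpace ℝ (Fin m)) :=
  {x | ∀ i, |x i - a' i| ≤ r}

namespace SmoothedPolicyAux

variable {m : ℕ}

lemma measurable_coord (i : Fin m) : Measurable fun a : EuclideanSpace ℝ (Fin m) => a i :=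
  (measurable_pi_apply i).comp (WithLp.measurable_ofLp ..)

lemma measurableSet_cube (m : ℕ) : MeasurableSet (euclideanUnitCube m) := by
  have h : euclideanUnitCube m
      = ⋂ i, (fun a : EuclideanSpace ℝ (Fin m) => a i) ⁻¹' Set.Icc (0:ℝ) 1 := by
    ext a; simp [euclideanUnitCube]
  rw [h]
  exact MeasurableSet.iInter fun i => (measurable_coord i) measurableSet_Icc

lemma measurableSet_linftyBall (a' : EuclideanSpace ℝ (Fin m)) (r : ℝ) :
    MeasurableSet (linftyBall m a' r) := by
  have h : linftyBall m a' r
      = ⋂ i, (fun x : EuclideanSpace ℝ (Fin m) => |x i - a' i|) ⁻¹' Set.Iic r := by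
    ext x; simp [linftyBall]
  rw [h]
  exact MeasurableSet.iInter fun i =>
    (((measurable_coord i).sub measurable_const).abs) measurableSet_Iic

lemma S_preimage (a' : EuclideanSpace ℝ (Fin m)) (r : ℝ) :
    linftyBall m a' r ∩ euclideanUnitCube m
      = (MeasurableEquiv.toLp 2 (Fin m → ℝ)).symm ⁻¹'
        (Set.pi Set.univ fun i => Set.Icc (max (a' i - r) 0) (min (a' i + r) 1)) := by
  ext x
  simp only [linftyBall, euclideanUnitCube, Set.mem_inter_iff, Set.mem_setOf_eq,
    Set.mem_preimage, Set.mem_pi, Set.mem_univ, forall_true_left, Set.mem_Icc,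
    MeasurableEquiv.toLp_symm_apply, MeasurableEquiv.coe_mk, true_implies]
  constructor
  · rintro ⟨h1, h2⟩ i
    obtain ⟨hl, hr⟩ := abs_sub_le_iff.mp (h1 i)
    obtain ⟨h0, h1'⟩ := h2 i
    exact ⟨max_le (by linarith) h0, le_min (by linarith) h1'⟩
  · intro h
    constructor
    · intro i; obtain ⟨hl, hr⟩ := h i
      have hx1 := le_trans (le_max_left (a' i - r) 0) hl
      have hx2 := le_trans hr (min_le_left (a' i + r) 1)
      rw [abs_sub_le_iff]; constructor <;> linarith
    · intro i; obtain ⟨hl, hr⟩ := h i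
      exact ⟨le_trans (le_max_right _ _) hl, le_trans hr (min_le_right _ _)⟩

lemma volume_S (a' : EuclideanSpace ℝ (Fin m)) (r : ℝ) :
    volume (linftyBall m a' r ∩ euclideanUnitCube m)
      = ∏ i, ENNReal.ofReal (min (a' i + r) 1 - max (a' i - r) 0) := by
  rw [S_preimage,
    MeasurePreserving.measure_preimage_equiv
      (EuclideanSpace.volume_preserving_symm_measurableEquiv_toLp (Fin m)) _,
    volume_pi_pi]
  simp [Real.volume_Icc]

lemma volume_S_lt_top (a' : EuclideanSpace ℝ (Fin m)) (r : ℝ) :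
    volume (linftyBall m a' r ∩ euclideanUnitCube m) < ⊤ := by
  rw [volume_S]
  exact ENNReal.prod_lt_top fun i _ => ENNReal.ofReal_lt_top

lemma volume_S_pos {a' : EuclideanSpace ℝ (Fin m)} (ha : a' ∈ euclideanUnitCube m)
    {r : ℝ} (hr0 : 0 < r) (hr1 : r ≤ 1) :
    0 < volume (linftyBall m a' r ∩ euclideanUnitCube m) := by
  rw [volume_S]
  refine CanonicallyOrderedAdd.prod_pos.mpr fun i _ => ?_
  rw [ENNReal.ofReal_pos]
  obtain ⟨h0, h1⟩ := ha i
  rcases le_or_gt (a' i + r) 1 with h | h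
  · have hmin : min (a' i + r) 1 = a' i + r := min_eq_left h
    have hmax : max (a' i - r) 0 ≤ a' i := max_le (by linarith) h0
    rw [hmin]; linarith
  · have hmin : min (a' i + r) 1 = 1 := min_eq_right h.le
    have hmax : max (a' i - r) 0 ≤ 1 - r := max_le (by linarith) (by linarith)
    rw [hmin]; linarith

lemma measurable_vol_inter {r : ℝ} {E : Set (EuclideanSpace ℝ (Fin m))}
    (hE : MeasurableSet E) :
    Measurable fun a' : EuclideanSpace ℝ (Fin m) =>
      volume (E ∩ (linftyBall m a' r ∩ euclideanUnitCube m)) := by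
  have hT : MeasurableSet {p : EuclideanSpace ℝ (Fin m) × EuclideanSpace ℝ (Fin m) |
      p.2 ∈ E ∩ (linftyBall m p.1 r ∩ euclideanUnitCube m)} := by
    have h1 : {p : EuclideanSpace ℝ (Fin m) × EuclideanSpace ℝ (Fin m) |
        p.2 ∈ E ∩ (linftyBall m p.1 r ∩ euclideanUnitCube m)}
        = (Prod.snd ⁻¹' (E ∩ euclideanUnitCube m)) ∩
          ⋂ i, {p : EuclideanSpace ℝ (Fin m) × EuclideanSpace ℝ (Fin m) |
            |p.2 i - p.1 i| ≤ r} := by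
      ext p
      simp [linftyBall, Set.mem_iInter]
      tauto
    rw [h1]
    refine (measurable_snd (hE.inter (measurableSet_cube m))).inter
      (MeasurableSet.iInter fun i => ?_)
    have hmeas : Measurable fun p : EuclideanSpace ℝ (Fin m) × EuclideanSpace ℝ (Fin m) =>
        |p.2 i - p.1 i| :=
      (((measurable_coord i).comp measurable_snd).sub
        ((measurable_coord i).comp measurable_fst)).abs
    exact hmeas measurableSet_Iic
  exact measurable_measure_prodMk_left (ν := (volume : Measure (EuclideanSpace ℝ (Fin m)))) hT

lemma measurable_nu (r : ℝ) :
    Measurable fun a' : EuclideanSpace ℝ (Fin m) =>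
      (volume (linftyBall m a' r ∩ euclideanUnitCube m))⁻¹ •
        volume.restrict (linftyBall m a' r ∩ euclideanUnitCube m) := by
  apply Measure.measurable_of_measurable_coe
  intro E hE
  have hrest : ∀ a' : EuclideanSpace ℝ (Fin m),
      ((volume (linftyBall m a' r ∩ euclideanUnitCube m))⁻¹ •
        volume.restrict (linftyBall m a' r ∩ euclideanUnitCube m)) E
      = (volume (Set.univ ∩ (linftyBall m a' r ∩ euclideanUnitCube m)))⁻¹ *
        volume (E ∩ (linftyBall m a' r ∩ euclideanUnitCube m)) := by
    intro a'
    rw [Measure.smul_apply, smul_eq_mul, Measure.restrict_apply hE, Set.univ_inter]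
  simp only [hrest]
  exact ((measurable_vol_inter MeasurableSet.univ).inv).mul (measurable_vol_inter hE)

end SmoothedPolicyAux

open SmoothedPolicyAux in
/-- **Lemma 7 (expectation under the smoothed policy).** Let `A = [0,1]^m`, `K ≥ 1`,
`r = K^{-1/m}/2`, and for `a' ∈ A` let `ν a'` be the uniform probability measure on
`B_∞(a', r) ∩ A`. For a probability measure `π` on `A`, the smoothed measure `π_K` is
the bind of `π` with `ν`. Then for every measurable `f : A → [0,1]` that is `α`-Hölder
continuous with constant `L` (w.r.t. the Euclidean norm),
`|∫ f dπ_K − ∫ f dπ| ≤ √m ⬝ L ⬝ K^{−α/m}`. -/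
theorem smoothed_policy_expectation (m : ℕ) (hm : 1 ≤ m)
    (α : ℝ) (hα0 : 0 < α) (hα1 : α ≤ 1) (L : ℝ) (hL : 0 ≤ L)
    (K : ℝ) (hK : 1 ≤ K)
    (π : Measure (EuclideanSpace ℝ (Fin m))) [IsProbabilityMeasure π]
    (hπ : π (euclideanUnitCube m) = 1)
    (f : EuclideanSpace ℝ (Fin m) → ℝ) (hf_meas : Measurable f)
    (hf01 : ∀ x ∈ euclideanUnitCube m, f x ∈ Set.Icc (0 : ℝ) 1)
    (hfHolder : ∀ x ∈ euclideanUnitCube m, ∀ y ∈ euclideanUnitCube m,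
      |f x - f y| ≤ L * ‖x - y‖ ^ α) :
    |(∫ x, f x ∂(π.bind (fun a' =>
          (volume (linftyBall m a' (K ^ (-(1 : ℝ) / m) / 2) ∩ euclideanUnitCube m))⁻¹ •
            volume.restrict
              (linftyBall m a' (K ^ (-(1 : ℝ) / m) / 2) ∩ euclideanUnitCube m))))
        - ∫ x, f x ∂π|
      ≤ Real.sqrt m * L * K ^ (-(α / m)) := by
  have hm0 : (0:ℝ) < m := by exact_mod_cast hm
  have hK0 : (0:ℝ) < K := lt_of_lt_of_le one_pos hK
  set r : ℝ := K ^ (-(1 : ℝ) / m) / 2 with hrdef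
  set C : ℝ := Real.sqrt m * L * K ^ (-(α / m)) with hCdef
  set ν : EuclideanSpace ℝ (Fin m) → Measure (EuclideanSpace ℝ (Fin m)) := fun a' =>
    (volume (linftyBall m a' r ∩ euclideanUnitCube m))⁻¹ •
      volume.restrict (linftyBall m a' r ∩ euclideanUnitCube m) with hνdef
  have hu_pos : 0 < K ^ (-(1:ℝ)/(m:ℝ)) := Real.rpow_pos_of_pos hK0 _
  have hu_le_one : K ^ (-(1:ℝ)/(m:ℝ)) ≤ 1 :=
    Real.rpow_le_one_of_one_le_of_nonpos hK
      (div_nonpos_of_nonpos_of_nonneg (by norm_num) hm0.le)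
  have hr0 : 0 < r := by rw [hrdef]; positivity
  have hr1 : r ≤ 1 := by rw [hrdef]; linarith
  have hC0 : 0 ≤ C := by
    rw [hCdef]
    have := (Real.rpow_pos_of_pos hK0 (-(α/m))).le
    positivity
  -- pointwise Hölder bound on the small box
  have key : ∀ a' ∈ euclideanUnitCube m, ∀ x ∈ linftyBall m a' r ∩ euclideanUnitCube m,
      |f x - f a'| ≤ C := by
    intro a' ha x hx
    have hxA : x ∈ euclideanUnitCube m := hx.2
    have hnorm : ‖x - a'‖ ≤ Real.sqrt m * r := by
      rw [EuclideanSpace.norm_eq]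
      have hsum : (∑ i, ‖(x - a') i‖ ^ 2) ≤ (m : ℝ) * r ^ 2 := by
        have hle : ∀ i, ‖(x - a') i‖ ^ 2 ≤ r ^ 2 := by
          intro i
          have h1 : |x i - a' i| ≤ r := hx.1 i
          have h2 : ‖(x - a') i‖ = |x i - a' i| := by
            rw [Real.norm_eq_abs]
            congr 1
          rw [h2]
          exact pow_le_pow_left₀ (abs_nonneg _) h1 2
        calc (∑ i, ‖(x - a') i‖ ^ 2) ≤ ∑ _i : Fin m, r ^ 2 :=
              Finset.sum_le_sum fun i _ => hle i
          _ = (m : ℝ) * r ^ 2 := by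
              simp [Finset.sum_const, nsmul_eq_mul]
      calc Real.sqrt (∑ i, ‖(x - a') i‖ ^ 2) ≤ Real.sqrt ((m:ℝ) * r ^ 2) :=
            Real.sqrt_le_sqrt hsum
        _ = Real.sqrt m * r := by
            rw [Real.sqrt_mul (le_of_lt hm0), Real.sqrt_sq hr0.le]
    have h2 := hfHolder x hxA a' ha
    have h3 : ‖x - a'‖ ^ α ≤ (Real.sqrt m * r) ^ α :=
      Real.rpow_le_rpow (norm_nonneg _) hnorm hα0.le
    have hs1 : (1:ℝ) ≤ Real.sqrt m := by
      rw [show (1:ℝ) = Real.sqrt 1 from (Real.sqrt_one).symm]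
      exact Real.sqrt_le_sqrt (by exact_mod_cast hm)
    have h4 : (Real.sqrt m * r) ^ α ≤ Real.sqrt m * K ^ (-(α/(m:ℝ))) := by
      have hsr : Real.sqrt m * r = (Real.sqrt m / 2) * K ^ (-(1:ℝ)/(m:ℝ)) := by
        rw [hrdef]; ring
      rw [hsr, Real.mul_rpow (by positivity) hu_pos.le]
      have e1 : (K ^ (-(1:ℝ)/(m:ℝ))) ^ α = K ^ (-(α/(m:ℝ))) := by
        rw [← Real.rpow_mul hK0.le]
        congr 1
        field_simp
      rw [e1]
      have h5 : (Real.sqrt m / 2) ^ α ≤ Real.sqrt m := by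
        rcases le_total (Real.sqrt m / 2) 1 with h | h
        · exact le_trans (Real.rpow_le_one (by positivity) h hα0.le) hs1
        · calc (Real.sqrt m / 2) ^ α ≤ (Real.sqrt m / 2) ^ (1:ℝ) :=
              Real.rpow_le_rpow_of_exponent_le h hα1
            _ = Real.sqrt m / 2 := Real.rpow_one _
            _ ≤ Real.sqrt m := by linarith [Real.sqrt_nonneg (m:ℝ)]
      exact mul_le_mul_of_nonneg_right h5 (Real.rpow_pos_of_pos hK0 _).le
    calc |f x - f a'| ≤ L * ‖x - a'‖ ^ α := h2
      _ ≤ L * (Real.sqrt m * K ^ (-(α/(m:ℝ)))) :=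
          mul_le_mul_of_nonneg_left (le_trans h3 h4) hL
      _ = C := by rw [hCdef]; ring
  -- measure-theoretic setup
  have hSmeas : ∀ a' : EuclideanSpace ℝ (Fin m),
      MeasurableSet (linftyBall m a' r ∩ euclideanUnitCube m) :=
    fun a' => (measurableSet_linftyBall a' r).inter (measurableSet_cube m)
  have hνmeas : Measurable ν := measurable_nu r
  have hc_ne_top : ∀ a' : EuclideanSpace ℝ (Fin m),
      volume (linftyBall m a' r ∩ euclideanUnitCube m) ≠ ⊤ :=
    fun a' => (volume_S_lt_top a' r).ne
  have hν_univ : ∀ a' ∈ euclideanUnitCube m, (ν a') Set.univ = 1 := by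
    intro a' ha
    rw [hνdef]
    simp only [Measure.smul_apply, smul_eq_mul,
      Measure.restrict_apply MeasurableSet.univ, Set.univ_inter]
    exact ENNReal.inv_mul_cancel (volume_S_pos ha hr0 hr1).ne' (hc_ne_top a')
  have hν_ae_S : ∀ a' : EuclideanSpace ℝ (Fin m),
      ∀ᵐ x ∂(ν a'), x ∈ linftyBall m a' r ∩ euclideanUnitCube m := by
    intro a'
    rw [MeasureTheory.ae_iff]
    have hset : {x : EuclideanSpace ℝ (Fin m) |
        ¬ x ∈ linftyBall m a' r ∩ euclideanUnitCube m}
        = (linftyBall m a' r ∩ euclideanUnitCube m)ᶜ := rfl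
    rw [hset, hνdef]
    simp only [Measure.smul_apply, smul_eq_mul,
      Measure.restrict_apply (hSmeas a').compl, Set.compl_inter_self,
      measure_empty, mul_zero]
  have hν_cube : ∀ a' : EuclideanSpace ℝ (Fin m), (ν a') (euclideanUnitCube m)ᶜ = 0 := by
    intro a'
    rw [hνdef]
    simp only [Measure.smul_apply, smul_eq_mul,
      Measure.restrict_apply (measurableSet_cube m).compl]
    have : (euclideanUnitCube m)ᶜ ∩ (linftyBall m a' r ∩ euclideanUnitCube m) = ∅ := by
      ext x; simp only [Set.mem_inter_iff, Set.mem_compl_iff, Set.mem_empty_iff_false,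
        iff_false]
      tauto
    rw [this]; simp
  have hf' : Measurable fun x => ENNReal.ofReal (f x) := hf_meas.ennreal_ofReal
  set ℓ : EuclideanSpace ℝ (Fin m) → ENNReal :=
    fun a' => ∫⁻ x, ENNReal.ofReal (f x) ∂(ν a') with hℓdef
  have hℓmeas : Measurable ℓ := (Measure.measurable_lintegral hf').comp hνmeas
  have h_bind_lint : ∫⁻ x, ENNReal.ofReal (f x) ∂(π.bind ν) = ∫⁻ a', ℓ a' ∂π :=
    Measure.lintegral_bind hνmeas.aemeasurable hf'.aemeasurable
  -- per-point bounds
  have hup : ∀ a' ∈ euclideanUnitCube m,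
      ℓ a' ≤ ENNReal.ofReal (f a') + ENNReal.ofReal C := by
    intro a' ha
    have hb : ∀ᵐ x ∂(ν a'),
        ENNReal.ofReal (f x) ≤ ENNReal.ofReal (f a') + ENNReal.ofReal C := by
      filter_upwards [hν_ae_S a'] with x hx
      have habs := abs_le.mp (key a' ha x hx)
      have hfx : f x ≤ f a' + C := by linarith [habs.1, habs.2]
      exact le_trans (ENNReal.ofReal_le_ofReal hfx) ENNReal.ofReal_add_le
    calc ℓ a' ≤ ∫⁻ _x, (ENNReal.ofReal (f a') + ENNReal.ofReal C) ∂(ν a') :=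
          lintegral_mono_ae hb
      _ = (ENNReal.ofReal (f a') + ENNReal.ofReal C) * (ν a') Set.univ :=
          lintegral_const _
      _ = ENNReal.ofReal (f a') + ENNReal.ofReal C := by rw [hν_univ a' ha, mul_one]
  have hdown : ∀ a' ∈ euclideanUnitCube m,
      ENNReal.ofReal (f a') ≤ ℓ a' + ENNReal.ofReal C := by
    intro a' ha
    have hb : ∀ᵐ x ∂(ν a'),
        ENNReal.ofReal (f a') ≤ ENNReal.ofReal (f x) + ENNReal.ofReal C := by
      filter_upwards [hν_ae_S a'] with x hx
      have habs := abs_le.mp (key a' ha x hx)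
      have hfa : f a' ≤ f x + C := by linarith [habs.1, habs.2]
      exact le_trans (ENNReal.ofReal_le_ofReal hfa) ENNReal.ofReal_add_le
    calc ENNReal.ofReal (f a')
        = (ENNReal.ofReal (f a')) * (ν a') Set.univ := by rw [hν_univ a' ha, mul_one]
      _ = ∫⁻ _x, ENNReal.ofReal (f a') ∂(ν a') := (lintegral_const _).symm
      _ ≤ ∫⁻ x, (ENNReal.ofReal (f x) + ENNReal.ofReal C) ∂(ν a') :=
          lintegral_mono_ae hb
      _ = ℓ a' + ENNReal.ofReal C * (ν a') Set.univ := by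
          rw [lintegral_add_right _ measurable_const, lintegral_const]
      _ = ℓ a' + ENNReal.ofReal C := by rw [hν_univ a' ha, mul_one]
  have hℓ_le_one : ∀ a' ∈ euclideanUnitCube m, ℓ a' ≤ 1 := by
    intro a' ha
    have hb : ∀ᵐ x ∂(ν a'), ENNReal.ofReal (f x) ≤ 1 := by
      filter_upwards [hν_ae_S a'] with x hx
      exact ENNReal.ofReal_le_one.mpr (hf01 x hx.2).2
    calc ℓ a' ≤ ∫⁻ _x, (1:ENNReal) ∂(ν a') := lintegral_mono_ae hb
      _ = (ν a') Set.univ := lintegral_one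
      _ = 1 := hν_univ a' ha
  -- a.e. membership of cube wrt π
  have hπ_compl : π (euclideanUnitCube m)ᶜ = 0 := by
    rw [measure_compl (measurableSet_cube m) (measure_ne_top π _), hπ, measure_univ]
    simp
  have hπae : ∀ᵐ a' ∂π, a' ∈ euclideanUnitCube m := by
    rw [MeasureTheory.ae_iff]
    exact hπ_compl
  set T : ENNReal := ∫⁻ a', ℓ a' ∂π with hTdef
  set U : ENNReal := ∫⁻ a', ENNReal.ofReal (f a') ∂π with hUdef
  have hT_le : T ≤ U + ENNReal.ofReal C := by
    calc T ≤ ∫⁻ a', (ENNReal.ofReal (f a') + ENNReal.ofReal C) ∂π := by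
          refine lintegral_mono_ae ?_
          filter_upwards [hπae] with a' ha using hup a' ha
      _ = U + ENNReal.ofReal C * π Set.univ := by
          rw [lintegral_add_right _ measurable_const, lintegral_const]
      _ = U + ENNReal.ofReal C := by rw [measure_univ, mul_one]
  have hU_le : U ≤ T + ENNReal.ofReal C := by
    calc U ≤ ∫⁻ a', (ℓ a' + ENNReal.ofReal C) ∂π := by
          refine lintegral_mono_ae ?_
          filter_upwards [hπae] with a' ha using hdown a' ha
      _ = T + ENNReal.ofReal C * π Set.univ := by
          rw [lintegral_add_right _ measurable_const, lintegral_const]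
      _ = T + ENNReal.ofReal C := by rw [measure_univ, mul_one]
  have hT_ne_top : T ≠ ⊤ := by
    have : T ≤ 1 := by
      calc T ≤ ∫⁻ _a, (1:ENNReal) ∂π := by
            refine lintegral_mono_ae ?_
            filter_upwards [hπae] with a' ha using hℓ_le_one a' ha
        _ = 1 := by rw [lintegral_one, measure_univ]
    exact ne_top_of_le_ne_top ENNReal.one_ne_top this
  have hU_ne_top : U ≠ ⊤ := by
    have : U ≤ 1 := by
      calc U ≤ ∫⁻ _a, (1:ENNReal) ∂π := by
            refine lintegral_mono_ae ?_
            filter_upwards [hπae] with a' ha using ENNReal.ofReal_le_one.mpr (hf01 a' ha).2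
        _ = 1 := by rw [lintegral_one, measure_univ]
    exact ne_top_of_le_ne_top ENNReal.one_ne_top this
  -- Bochner integrals as lintegrals
  have hbind_compl : (π.bind ν) (euclideanUnitCube m)ᶜ = 0 := by
    rw [Measure.bind_apply (measurableSet_cube m).compl hνmeas.aemeasurable]
    simp [hν_cube]
  have hbind_ae : ∀ᵐ x ∂(π.bind ν), x ∈ euclideanUnitCube m := by
    rw [MeasureTheory.ae_iff]
    exact hbind_compl
  have hf_nonneg_bind : 0 ≤ᵐ[π.bind ν] f := by
    filter_upwards [hbind_ae] with x hx using (hf01 x hx).1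
  have hf_nonneg_π : 0 ≤ᵐ[π] f := by
    filter_upwards [hπae] with x hx using (hf01 x hx).1
  have h_int_bind : ∫ x, f x ∂(π.bind ν) = T.toReal := by
    rw [integral_eq_lintegral_of_nonneg_ae hf_nonneg_bind hf_meas.aestronglyMeasurable,
      h_bind_lint]
  have h_int_π : ∫ x, f x ∂π = U.toReal := by
    rw [integral_eq_lintegral_of_nonneg_ae hf_nonneg_π hf_meas.aestronglyMeasurable]
  rw [h_int_bind, h_int_π]
  rw [abs_le]
  constructor
  · have h := ENNReal.toReal_mono
      (ENNReal.add_ne_top.mpr ⟨hT_ne_top, ENNReal.ofReal_ne_top⟩) hU_le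
    rw [ENNReal.toReal_add hT_ne_top ENNReal.ofReal_ne_top, ENNReal.toReal_ofReal hC0] at h
    linarith
  · have h := ENNReal.toReal_mono
      (ENNReal.add_ne_top.mpr ⟨hU_ne_top, ENNReal.ofReal_ne_top⟩) hT_le
    rw [ENNReal.toReal_add hU_ne_top ENNReal.ofReal_ne_top, ENNReal.toReal_ofReal hC0] at h
    linarith
end

section
/- Let d ≥ 1 be an integer, β ∈ (0, 1], and T ≥ 1 an integer. Let M_1, …, M_T be real symmetric positive semidefinite d × d matrices, each with trace(M_t) ≤ 1. Define Σ_0 = I_d (the d × d identity) and Σ_t = Σ_{t−1} + M_t for t = 1, …, T (so each Σ_t is positive definite, hence invertible). If trace(M_t Σ_{t−1}^{−1}) ≥ β/2 for every t ∈ {1, …, T}, then T ≤ (8d/β) · log(1 + 8/β). -/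
open Matrix Finset

private lemma one_add_sum_le_prod {ι : Type*} (s : Finset ι) (f : ι → ℝ)
    (hf : ∀ i ∈ s, 0 ≤ f i) :
    1 + ∑ i ∈ s, f i ≤ ∏ i ∈ s, (1 + f i) := by
  classical
  induction s using Finset.induction with
  | empty => simp
  | @insert a s ha ih =>
    rw [Finset.sum_insert ha, Finset.prod_insert ha]
    have h1 : 0 ≤ f a := hf a (Finset.mem_insert_self a s)
    have h2 : ∀ i ∈ s, 0 ≤ f i := fun i hi => hf i (Finset.mem_insert_of_mem hi)
    have h3 : 0 ≤ ∑ i ∈ s, f i := Finset.sum_nonneg h2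
    nlinarith [ih h2]

private lemma trace_eq_sum_eigs {n : Type*} [Fintype n] [DecidableEq n]
    {A : Matrix n n ℝ} (hA : A.IsHermitian) :
    A.trace = ∑ i, hA.eigenvalues i := by
  nth_rewrite 1 [hA.spectral_theorem]
  rw [Unitary.conjStarAlgAut_apply]
  rw [Matrix.trace_mul_cycle]
  have h1 : (star (hA.eigenvectorUnitary : Matrix n n ℝ)) *
      (hA.eigenvectorUnitary : Matrix n n ℝ) = 1 :=
    Unitary.star_mul_self_of_mem (hA.eigenvectorUnitary).2
  rw [h1, one_mul, Matrix.trace_diagonal]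
  simp

private lemma det_one_add_psd {n : Type*} [Fintype n] [DecidableEq n]
    {A : Matrix n n ℝ} (hA : A.PosSemidef) :
    1 + A.trace ≤ (1 + A).det := by
  have hU : (hA.1.eigenvectorUnitary : Matrix n n ℝ) *
      (star (hA.1.eigenvectorUnitary : Matrix n n ℝ)) = 1 :=
    Unitary.mul_star_self_of_mem (hA.1.eigenvectorUnitary).2
  have hdet : (1 + A).det = ∏ i, (1 + hA.1.eigenvalues i) := by
    nth_rewrite 1 [hA.1.spectral_theorem]
    rw [Unitary.conjStarAlgAut_apply]
    have key : (1 : Matrix n n ℝ) + (hA.1.eigenvectorUnitary : Matrix n n ℝ) *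
        (diagonal (RCLike.ofReal ∘ hA.1.eigenvalues)) *
        (star (hA.1.eigenvectorUnitary : Matrix n n ℝ)) =
        (hA.1.eigenvectorUnitary : Matrix n n ℝ) *
        ((1 : Matrix n n ℝ) + diagonal (RCLike.ofReal ∘ hA.1.eigenvalues)) *
        (star (hA.1.eigenvectorUnitary : Matrix n n ℝ)) := by
      rw [Matrix.mul_add, Matrix.add_mul, Matrix.mul_one, hU]
    rw [key, Matrix.det_mul_right_comm, hU, one_mul]
    have : (1 : Matrix n n ℝ) + diagonal (RCLike.ofReal ∘ hA.1.eigenvalues) =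
        diagonal (fun i => 1 + hA.1.eigenvalues i) := by
      rw [← Matrix.diagonal_one, Matrix.diagonal_add]
      congr 1
    rw [this, Matrix.det_diagonal]
  rw [hdet, trace_eq_sum_eigs hA.1]
  exact one_add_sum_le_prod Finset.univ _ (fun i _ => hA.eigenvalues_nonneg i)

private lemma trace_nonneg_of_psd {n : Type*} [Fintype n] [DecidableEq n]
    {A : Matrix n n ℝ} (hA : A.PosSemidef) : 0 ≤ A.trace := by
  rw [trace_eq_sum_eigs hA.1]
  exact Finset.sum_nonneg fun i _ => hA.eigenvalues_nonneg i

private lemma log_det_le_card_log {n : Type*} [Fintype n] [DecidableEq n] [Nonempty n]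
    {A : Matrix n n ℝ} (hA : A.PosDef) :
    Real.log A.det ≤ (Fintype.card n : ℝ) *
      Real.log (A.trace / (Fintype.card n : ℝ)) := by
  classical
  set c : ℝ := (Fintype.card n : ℝ) with hc
  have hc0 : 0 < c := by
    simp only [hc]
    exact_mod_cast Fintype.card_pos
  have hdet : A.det = ∏ i, hA.1.eigenvalues i := by
    rw [hA.isHermitian.det_eq_prod_eigenvalues]
    norm_cast
  have heigpos : ∀ i, 0 < hA.1.eigenvalues i := hA.eigenvalues_pos
  rw [hdet, Real.log_prod (fun i _ => (heigpos i).ne')]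
  have hjensen : ∑ i, (1/c) • Real.log (hA.1.eigenvalues i) ≤
      Real.log (∑ i, (1/c) • hA.1.eigenvalues i) := by
    refine (strictConcaveOn_log_Ioi.concaveOn).le_map_sum
      (fun i _ => by positivity) ?_ (fun i _ => heigpos i)
    rw [Finset.sum_const, Finset.card_univ, nsmul_eq_mul]
    field_simp
    exact hc.symm
  have hsum : ∑ i, (1/c) • hA.1.eigenvalues i = A.trace / c := by
    rw [trace_eq_sum_eigs hA.1, ← Finset.smul_sum, smul_eq_mul]
    ring
  rw [hsum] at hjensen
  have : ∑ i, (1/c) • Real.log (hA.1.eigenvalues i) =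
      (1/c) * ∑ i, Real.log (hA.1.eigenvalues i) := by
    rw [← Finset.smul_sum, smul_eq_mul]
  rw [this] at hjensen
  calc ∑ i, Real.log (hA.1.eigenvalues i)
      = c * ((1/c) * ∑ i, Real.log (hA.1.eigenvalues i)) := by field_simp
    _ ≤ c * Real.log (A.trace / c) := by
        exact mul_le_mul_of_nonneg_left hjensen hc0.le

open scoped MatrixOrder in
private lemma psd_sqrt_exists {n : Type*} [Fintype n] [DecidableEq n]
    {A : Matrix n n ℝ} (hA : A.PosSemidef) : ∃ R : Matrix n n ℝ, R * R = A ∧ Rᴴ = R :=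
  ⟨CFC.sqrt A, CFC.sqrt_mul_sqrt_self A hA.nonneg, (CFC.sqrt_nonneg A).posSemidef.1⟩

/-- **Elliptical potential termination bound (adaptation of FLAMBE Lemma 17).**
Let `M_1, …, M_T` be symmetric PSD `d × d` matrices with trace at most `1`, and set
`Σ_0 = I`, `Σ_t = Σ_{t−1} + M_t` (so `Σ_t = I + ∑_{i ≤ t} M_i`). If
`trace(M_t Σ_{t−1}^{−1}) ≥ β/2` for every `t ∈ {1, …, T}`, then
`T ≤ (8d/β) log(1 + 8/β)`. -/
theorem elliptical_potential_bound (d : ℕ) (hd : 1 ≤ d)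
    (β : ℝ) (hβ0 : 0 < β) (hβ1 : β ≤ 1)
    (T : ℕ) (hT : 1 ≤ T)
    (M : ℕ → Matrix (Fin d) (Fin d) ℝ)
    (hpsd : ∀ t, 1 ≤ t → t ≤ T → (M t).PosSemidef)
    (htr : ∀ t, 1 ≤ t → t ≤ T → (M t).trace ≤ 1)
    (hlow : ∀ t, 1 ≤ t → t ≤ T →
      β / 2 ≤ (M t * (1 + ∑ i ∈ Finset.Icc 1 (t - 1), M i)⁻¹).trace) :
    (T : ℝ) ≤ 8 * d / β * Real.log (1 + 8 / β) := by
  classical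
  haveI : Nonempty (Fin d) := ⟨⟨0, hd⟩⟩
  set Sg : ℕ → Matrix (Fin d) (Fin d) ℝ :=
    fun t => 1 + ∑ i ∈ Finset.Icc 1 t, M i with hSg
  have hSg0 : Sg 0 = 1 := by simp [hSg]
  have hsucc : ∀ t : ℕ, Sg (t + 1) = Sg t + M (t + 1) := by
    intro t
    simp only [hSg]
    rw [Finset.sum_Icc_succ_top (by omega : 1 ≤ t + 1)]
    rw [add_assoc]
  have hpd : ∀ t, t ≤ T → (Sg t).PosDef := by
    intro t
    induction t with
    | zero => intro _; rw [hSg0]; exact Matrix.PosDef.one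
    | succ k ih =>
      intro hk
      rw [hsucc]
      exact (ih (by omega)).add_posSemidef (hpsd (k + 1) (by omega) hk)
  -- the key per-step inequality
  have hlog4 : β / 4 ≤ Real.log (1 + β / 2) := by
    have h := Real.log_le_sub_one_of_pos (x := (1 + β / 2)⁻¹) (by positivity)
    rw [Real.log_inv] at h
    have hinv : (1 + β / 2)⁻¹ * (1 + β / 2) = 1 := by
      field_simp
    nlinarith [h, hinv]
  have key : ∀ k : ℕ, k + 1 ≤ T →
      Real.log (Sg k).det + β / 4 ≤ Real.log (Sg (k + 1)).det := by
    intro k hk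
    have hS : (Sg k).PosDef := hpd k (by omega)
    have hM : (M (k + 1)).PosSemidef := hpsd (k + 1) (by omega) hk
    set S := Sg k with hSdef
    obtain ⟨R, hR, hRH⟩ := psd_sqrt_exists hM
    have hSinv : (S⁻¹).PosSemidef := hS.inv.posSemidef
    have hB : (R * S⁻¹ * R).PosSemidef := by
      have := hSinv.conjTranspose_mul_mul_same R
      rwa [hRH] at this
    have htrB : (R * S⁻¹ * R).trace = (M (k + 1) * S⁻¹).trace := by
      rw [Matrix.trace_mul_cycle, hR]
    have hlowk : β / 2 ≤ (M (k + 1) * S⁻¹).trace := by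
      have := hlow (k + 1) (by omega) hk
      simpa [hSg, Nat.add_sub_cancel] using this
    have hSunit : S * S⁻¹ = 1 :=
      Matrix.mul_nonsing_inv S (isUnit_iff_ne_zero.mpr hS.det_pos.ne')
    have hfac : Sg (k + 1) = S * (1 + S⁻¹ * M (k + 1)) := by
      rw [hsucc, Matrix.mul_add, Matrix.mul_one, ← Matrix.mul_assoc, hSunit, one_mul]
    have hdet2 : 1 + β / 2 ≤ (1 + S⁻¹ * M (k + 1)).det := by
      have heq : (1 + S⁻¹ * M (k + 1)).det = (1 + R * S⁻¹ * R).det := by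
        rw [← hR, ← Matrix.mul_assoc, Matrix.det_one_add_mul_comm, ← Matrix.mul_assoc]
      rw [heq]
      have := det_one_add_psd hB
      rw [htrB] at this
      linarith
    have hdetmul : (Sg (k + 1)).det = S.det * (1 + S⁻¹ * M (k + 1)).det := by
      rw [hfac, Matrix.det_mul]
    have hdetSpos : 0 < S.det := hS.det_pos
    have hdet2pos : (0 : ℝ) < (1 + S⁻¹ * M (k + 1)).det := by linarith
    rw [hdetmul, Real.log_mul hdetSpos.ne' hdet2pos.ne']
    have hloglarge : Real.log (1 + β / 2) ≤ Real.log (1 + S⁻¹ * M (k + 1)).det :=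
      Real.log_le_log (by positivity) hdet2
    linarith
  -- telescoping lower bound
  have tele : ∀ t, t ≤ T → (t : ℝ) * (β / 4) ≤ Real.log (Sg t).det := by
    intro t
    induction t with
    | zero => intro _; simp [hSg0]
    | succ k ih =>
      intro hk
      have h1 := key k hk
      have h2 := ih (by omega)
      push_cast
      linarith
  have hlower : (T : ℝ) * (β / 4) ≤ Real.log (Sg T).det := tele T le_rfl
  -- trace upper bound
  have htrS : (Sg T).trace ≤ (d : ℝ) + T := by
    simp only [hSg]
    rw [Matrix.trace_add, Matrix.trace_one, Matrix.trace_sum]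
    have : ∑ i ∈ Finset.Icc 1 T, (M i).trace ≤ ∑ i ∈ Finset.Icc 1 T, (1 : ℝ) := by
      refine Finset.sum_le_sum fun i hi => ?_
      rw [Finset.mem_Icc] at hi
      exact htr i hi.1 hi.2
    rw [Finset.sum_const, Nat.card_Icc, nsmul_eq_mul, mul_one] at this
    simp only [Fintype.card_fin]
    simp only [Nat.add_sub_cancel] at this
    push_cast at this ⊢
    linarith
  have htrSlow : (d : ℝ) ≤ (Sg T).trace := by
    simp only [hSg]
    rw [Matrix.trace_add, Matrix.trace_one, Matrix.trace_sum]
    have : (0:ℝ) ≤ ∑ i ∈ Finset.Icc 1 T, (M i).trace := by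
      refine Finset.sum_nonneg fun i hi => ?_
      rw [Finset.mem_Icc] at hi
      exact trace_nonneg_of_psd (hpsd i hi.1 hi.2)
    simp only [Fintype.card_fin]
    linarith
  have hd0 : (0 : ℝ) < d := by exact_mod_cast hd
  have hT0 : (0 : ℝ) ≤ T := by positivity
  -- log-det upper bound
  have hupper : Real.log (Sg T).det ≤ (d : ℝ) * Real.log (1 + (T : ℝ) / d) := by
    have h := log_det_le_card_log (hpd T le_rfl)
    simp only [Fintype.card_fin] at h
    refine h.trans ?_
    have hle : (Sg T).trace / d ≤ 1 + (T : ℝ) / d := by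
      rw [div_le_iff₀ hd0]
      field_simp
      linarith
    have hpos : 0 < (Sg T).trace / d := div_pos (lt_of_lt_of_le hd0 htrSlow) hd0
    exact mul_le_mul_of_nonneg_left (Real.log_le_log hpos hle) hd0.le
  -- self-bounding argument
  have hsplit : Real.log (1 + (T : ℝ) / d) ≤
      Real.log (1 + 8 / β) + (T : ℝ) * β / (8 * d) := by
    have h1 : 1 + (T : ℝ) / d ≤ (1 + 8 / β) * (1 + (T : ℝ) * β / (8 * d)) := by
      have e1 : (0:ℝ) ≤ 8 / β := by positivity
      have e2 : (0:ℝ) ≤ (T : ℝ) * β / (8 * d) := by positivity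
      have e3 : (8 / β) * ((T : ℝ) * β / (8 * d)) = (T : ℝ) / d := by
        field_simp
      nlinarith
    calc Real.log (1 + (T : ℝ) / d)
        ≤ Real.log ((1 + 8 / β) * (1 + (T : ℝ) * β / (8 * d))) :=
          Real.log_le_log (by positivity) h1
      _ = Real.log (1 + 8 / β) + Real.log (1 + (T : ℝ) * β / (8 * d)) :=
          Real.log_mul (by positivity) (by positivity)
      _ ≤ Real.log (1 + 8 / β) + (T : ℝ) * β / (8 * d) := by
          have := Real.log_le_sub_one_of_pos
            (x := 1 + (T : ℝ) * β / (8 * d)) (by positivity)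
          linarith
  have hfinal : (T : ℝ) * (β / 4) ≤
      (d : ℝ) * Real.log (1 + 8 / β) + (T : ℝ) * β / 8 := by
    have h := hlower.trans hupper
    have h2 : (d : ℝ) * Real.log (1 + (T : ℝ) / d) ≤
        (d : ℝ) * (Real.log (1 + 8 / β) + (T : ℝ) * β / (8 * d)) :=
      mul_le_mul_of_nonneg_left hsplit hd0.le
    have h3 : (d : ℝ) * ((T : ℝ) * β / (8 * d)) = (T : ℝ) * β / 8 := by
      field_simp
    calc (T : ℝ) * (β / 4) ≤ (d : ℝ) * (Real.log (1 + 8 / β) + (T : ℝ) * β / (8 * d)) :=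
          h.trans h2
      _ = (d : ℝ) * Real.log (1 + 8 / β) + (T : ℝ) * β / 8 := by rw [mul_add, h3]
  -- conclude
  rw [div_mul_eq_mul_div, le_div_iff₀ hβ0]
  nlinarith [hfinal]
end
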